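/- Consider a Bell setup on ℂ⁴ with orthonormal bases {a₁,a₂}, {a'₁,a'₂}, {b₁,b₂}, {b'₁,b'₂} of ℂ², a unit vector p ∈ ℂ⁴, and four coincidence measurements e_{AB}, e_{AB'}, e_{A'B}, e_{A'B'}, where each measurement is given by an orthonormal basis of ℂ⁴, and where measurement e_{XY} is called a product measurement if its basis is {xᵢ ⊗ yⱼ : i,j ∈ {1,2}} for the corresponding single-subsystem bases. If at least three of the four coincidence measurements are product measurements, then at least one of the four measurements satisfies the marginal distribution law in the state p with respect to each of its two partner measurements. Equivalently (Theorem 4 of the paper): if no measurement among e_{AB}, e_{AB'}, e_{A'B}, e_{A'B'} satisfies the marginal distribution law in the state p, then at least two of the four measurements are entangled (not product measurements). -/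

import Mathlib

open scoped InnerProductSpace
open Matrix

noncomputable section

/-- `ℂ²` as a Hilbert space. -/
abbrev C2 : Type := EuclideanSpace ℂ (Fin 2)

/-- `ℂ⁴` as a Hilbert space. -/
abbrev C4 : Type := EuclideanSpace ℂ (Fin 4)

/-- Kronecker product of vectors: `(x ⊗ y)_(2i+j) = xᵢ · yⱼ`. -/
def vKron (x y : C2) : C4 :=
  (WithLp.equiv 2 (Fin 4 → ℂ)).symm fun k =>
    x (⟨k.val / 2, by omega⟩ : Fin 2) * y (⟨k.val % 2, by omega⟩ : Fin 2)

/-- Kronecker product of 2×2 matrices as a 4×4 matrix. -/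
def mKron (M N : Matrix (Fin 2) (Fin 2) ℂ) : Matrix (Fin 4) (Fin 4) ℂ :=
  Matrix.of fun i j =>
    M (⟨i.val / 2, by omega⟩ : Fin 2) (⟨j.val / 2, by omega⟩ : Fin 2) *
      N (⟨i.val % 2, by omega⟩ : Fin 2) (⟨j.val % 2, by omega⟩ : Fin 2)

/-- The rank-one matrix `u · uᴴ` (`uu*`). -/
def rankOne {n : ℕ} (u : EuclideanSpace ℂ (Fin n)) : Matrix (Fin n) (Fin n) ℂ :=
  Matrix.of fun i j => u i * star (u j)

/-- The vector `(a, b, c, d) ∈ ℂ⁴`. -/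
def vec4 (a b c d : ℂ) : C4 :=
  (WithLp.equiv 2 (Fin 4 → ℂ)).symm ![a, b, c, d]

/-- The marginal distribution law in state `p` between two coincidence measurements
sharing the A-side (first index): for each `i`, `Σⱼ |⟨e(i,j), p⟩|² = Σⱼ |⟨f(i,j), p⟩|²`. -/
def MargA (p : C4) (e f : Fin 2 × Fin 2 → C4) : Prop :=
  ∀ i : Fin 2, ∑ j : Fin 2, ‖⟪e (i, j), p⟫_ℂ‖ ^ 2 = ∑ j : Fin 2, ‖⟪f (i, j), p⟫_ℂ‖ ^ 2

/-- The marginal distribution law in state `p` between two coincidence measurements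
sharing the B-side (second index): for each `j`, `Σᵢ |⟨e(i,j), p⟩|² = Σᵢ |⟨f(i,j), p⟩|²`. -/
def MargB (p : C4) (e f : Fin 2 × Fin 2 → C4) : Prop :=
  ∀ j : Fin 2, ∑ i : Fin 2, ‖⟪e (i, j), p⟫_ℂ‖ ^ 2 = ∑ i : Fin 2, ‖⟪f (i, j), p⟫_ℂ‖ ^ 2

/-- A coincidence measurement `e` is a product measurement with single-subsystem bases
`x`, `y` if its basis is `{xᵢ ⊗ yⱼ}`. -/
def IsProductMeas (e : Fin 2 × Fin 2 → C4) (x y : Fin 2 → C2) : Prop :=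
  e = fun ij => vKron (x ij.1) (y ij.2)


noncomputable def qA (x : C2) (p : C4) : C2 :=
  (WithLp.equiv 2 (Fin 2 → ℂ)).symm fun t =>
    star (x 0) * p (⟨t.val, by omega⟩ : Fin 4) + star (x 1) * p (⟨t.val + 2, by omega⟩ : Fin 4)

noncomputable def qB (y : C2) (p : C4) : C2 :=
  (WithLp.equiv 2 (Fin 2 → ℂ)).symm fun s =>
    star (y 0) * p (⟨2 * s.val, by omega⟩ : Fin 4) + star (y 1) * p (⟨2 * s.val + 1, by omega⟩ : Fin 4)

lemma vK0 (x y : C2) : vKron x y 0 = x 0 * y 0 := rfl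
lemma vK1 (x y : C2) : vKron x y 1 = x 0 * y 1 := rfl
lemma vK2 (x y : C2) : vKron x y 2 = x 1 * y 0 := rfl
lemma vK3 (x y : C2) : vKron x y 3 = x 1 * y 1 := rfl
lemma qA0 (x : C2) (p : C4) : qA x p 0 = star (x 0) * p 0 + star (x 1) * p 2 := rfl
lemma qA1 (x : C2) (p : C4) : qA x p 1 = star (x 0) * p 1 + star (x 1) * p 3 := rfl
lemma qB0 (y : C2) (p : C4) : qB y p 0 = star (y 0) * p 0 + star (y 1) * p 1 := rfl
lemma qB1 (y : C2) (p : C4) : qB y p 1 = star (y 0) * p 2 + star (y 1) * p 3 := rfl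

lemma inner_vKron_A (x y : C2) (p : C4) : ⟪vKron x y, p⟫_ℂ = ⟪y, qA x p⟫_ℂ := by
  simp only [PiLp.inner_apply, Fin.sum_univ_four, Fin.sum_univ_two, RCLike.inner_apply,
    vK0, vK1, vK2, vK3, qA0, qA1, map_add, _root_.map_mul, RingHom.coe_coe, starRingEnd_apply, star_mul']
  ring

lemma inner_vKron_B (x y : C2) (p : C4) : ⟪vKron x y, p⟫_ℂ = ⟪x, qB y p⟫_ℂ := by
  simp only [PiLp.inner_apply, Fin.sum_univ_four, Fin.sum_univ_two, RCLike.inner_apply,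
    vK0, vK1, vK2, vK3, qB0, qB1, map_add, _root_.map_mul, RingHom.coe_coe, starRingEnd_apply, star_mul']
  ring

lemma parseval (y : Fin 2 → C2) (hy : Orthonormal ℂ y) (q : C2) :
    ∑ j : Fin 2, ‖⟪y j, q⟫_ℂ‖ ^ 2 = ‖q‖ ^ 2 := by
  have hcard : Fintype.card (Fin 2) = Module.finrank ℂ C2 := by
    simp [finrank_euclideanSpace]
  let b : OrthonormalBasis (Fin 2) ℂ C2 :=
    (basisOfOrthonormalOfCardEqFinrank hy hcard).toOrthonormalBasis
      (by rwa [coe_basisOfOrthonormalOfCardEqFinrank])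
  have hb : ∀ j, b j = y j := fun j => by
    simp [b, Module.Basis.coe_toOrthonormalBasis, coe_basisOfOrthonormalOfCardEqFinrank]
  have h1 : ‖q‖ = ‖b.repr q‖ := (b.repr.norm_map q).symm
  rw [show (∑ j : Fin 2, ‖⟪y j, q⟫_ℂ‖ ^ 2) = ∑ j : Fin 2, ‖b.repr q j‖ ^ 2 by
      refine Finset.sum_congr rfl fun j _ => ?_
      rw [b.repr_apply_apply, hb],
    h1]
  rw [EuclideanSpace.norm_eq]
  rw [Real.sq_sqrt (by positivity)]

lemma margA_prod (x y y' : Fin 2 → C2) (hy : Orthonormal ℂ y) (hy' : Orthonormal ℂ y')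
    (p : C4) :
    MargA p (fun ij => vKron (x ij.1) (y ij.2)) (fun ij => vKron (x ij.1) (y' ij.2)) := by
  intro i
  simp only [inner_vKron_A]
  rw [parseval y hy, parseval y' hy']

lemma margB_prod (x x' y : Fin 2 → C2) (hx : Orthonormal ℂ x) (hx' : Orthonormal ℂ x')
    (p : C4) :
    MargB p (fun ij => vKron (x ij.1) (y ij.2)) (fun ij => vKron (x' ij.1) (y ij.2)) := by
  intro j
  simp only [inner_vKron_B]
  rw [parseval x hx, parseval x' hx']

/-- Theorem 4 of the paper. In a Bell setup with orthonormal bases `a, a', b, b'` of `ℂ²`,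
a unit state `p ∈ ℂ⁴` and four coincidence measurements `e_{AB}, e_{AB'}, e_{A'B}, e_{A'B'}`
(orthonormal bases of `ℂ⁴`): if at least three of the four measurements are product
measurements, then at least one of the four satisfies the marginal distribution law in `p`
with respect to each of its two partner measurements. Equivalently: if no measurement
satisfies the marginal distribution law, at least two measurements are entangled. -/
theorem stmt_3 (a a' b b' : Fin 2 → C2)
    (ha : Orthonormal ℂ a) (ha' : Orthonormal ℂ a')
    (hb : Orthonormal ℂ b) (hb' : Orthonormal ℂ b')
    (p : C4) (hp : ‖p‖ = 1)
    (eAB eAB' eA'B eA'B' : Fin 2 × Fin 2 → C4)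
    (hAB : Orthonormal ℂ eAB) (hAB' : Orthonormal ℂ eAB')
    (hA'B : Orthonormal ℂ eA'B) (hA'B' : Orthonormal ℂ eA'B')
    (hthree :
      (IsProductMeas eAB a b ∧ IsProductMeas eAB' a b' ∧ IsProductMeas eA'B a' b) ∨
      (IsProductMeas eAB a b ∧ IsProductMeas eAB' a b' ∧ IsProductMeas eA'B' a' b') ∨
      (IsProductMeas eAB a b ∧ IsProductMeas eA'B a' b ∧ IsProductMeas eA'B' a' b') ∨
      (IsProductMeas eAB' a b' ∧ IsProductMeas eA'B a' b ∧ IsProductMeas eA'B' a' b')) :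
    (MargA p eAB eAB' ∧ MargB p eAB eA'B) ∨
    (MargA p eAB' eAB ∧ MargB p eAB' eA'B') ∨
    (MargA p eA'B eA'B' ∧ MargB p eA'B eAB) ∨
    (MargA p eA'B' eA'B ∧ MargB p eA'B' eAB') := by
  rcases hthree with ⟨h1, h2, h3⟩ | ⟨h1, h2, h3⟩ | ⟨h1, h2, h3⟩ | ⟨h1, h2, h3⟩
  · exact Or.inl ⟨by rw [h1, h2]; exact margA_prod a b b' hb hb' p,
      by rw [h1, h3]; exact margB_prod a a' b ha ha' p⟩
  · exact Or.inr (Or.inl ⟨by rw [h2, h1]; exact margA_prod a b' b hb' hb p,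
      by rw [h2, h3]; exact margB_prod a a' b' ha ha' p⟩)
  · exact Or.inr (Or.inr (Or.inl ⟨by rw [h2, h3]; exact margA_prod a' b b' hb hb' p,
      by rw [h2, h1]; exact margB_prod a' a b ha' ha p⟩))
  · exact Or.inr (Or.inr (Or.inr ⟨by rw [h3, h2]; exact margA_prod a' b' b hb' hb p,
      by rw [h3, h1]; exact margB_prod a' a b' ha' ha p⟩))
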